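/- Let k be a finite field and C a smooth projective curve over k with a separable degree two morphism φ: C → P¹ defined over k. For i ≥ 1 let A(i) denote the set of points of P¹ whose exact field of definition is k_i, let b_i(C_φ) be the number of α ∈ A(i) with |φ^{-1}(α)| = 2 and both preimages defined over k_i, and c_i(C_φ) the number of α ∈ A(i) with |φ^{-1}(α)| = 2 and the preimages not defined over k_i (hence defined over k_{2i} and swapped by Frobenius^i). Then for every n ≥ 1, the trace of Frobenius a_n(C) = 1 + q^n − |C(k_n)| satisfies a_n(C) = ∑_{i | n, 2i ∤ n} (c_i(C_φ) − b_i(C_φ)) + ∑_{i : 2i | n} (−b_i(C_φ) − c_i(C_φ)). -/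
import Mathlib


open Finset

-- aux 1: card via fibers
lemma card_eq_sum_card_fibers {α β : Type*} [Fintype β] (f : α → β)
    (h : ∀ b, Finite {a // f a = b}) :
    Nat.card α = ∑ b : β, Nat.card {a // f a = b} := by
  classical
  haveI : ∀ b, Fintype {a // f a = b} := fun b => Fintype.ofFinite _
  rw [← Nat.card_congr (Equiv.sigmaFiberEquiv f)]
  simp [Nat.card_eq_fintype_card, Fintype.card_sigma]

-- aux 2: swap iteration
lemma swap_iter {α : Type*} (g : α → α) (x1 x2 : α) (h1 : g x1 = x2) (h2 : g x2 = x1) :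
    ∀ t, g^[2*t] x1 = x1 ∧ g^[2*t+1] x1 = x2 := by
  intro t
  induction t with
  | zero => simpa
  | succ k ih =>
    constructor
    · have : 2*(k+1) = (2*k+1)+1 := by ring
      rw [this, Function.iterate_succ_apply', ih.2, h2]
    · have : 2*(k+1)+1 = (2*k+1)+1+1 := by ring
      rw [this, Function.iterate_succ_apply', Function.iterate_succ_apply', ih.2, h2, h1]

lemma natCard_subtype_restrict {β : Type*} (p q : β → Prop) (h : ∀ y, p y → q y) :
    Nat.card {y : β // p y} = Nat.card {z : {y : β // q y} // p z.val} :=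
  Nat.card_congr ⟨fun a => ⟨⟨a.1, h a.1 a.2⟩, a.2⟩, fun z => ⟨z.1.1, z.2⟩,
    fun a => rfl, fun z => rfl⟩


open scoped Classical in
lemma fiber_fixed_count {X Y : Type*} (FX : X ≃ X) (φ : X → Y) (y : Y)
    (h1 : 1 ≤ Nat.card {x : X // φ x = y}) (h2 : Nat.card {x : X // φ x = y} ≤ 2)
    (i n : ℕ) (hi : 0 < i) (hdvd : i ∣ n)
    (hstab : ∀ x : X, φ x = y → φ ((⇑FX)^[i] x) = y) :
    Nat.card {x : X // φ x = y ∧ (⇑FX)^[n] x = x} =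
      if Nat.card {x : X // φ x = y} = 2 then
        (if ∀ x : X, φ x = y → (⇑FX)^[i] x = x then 2
         else if 2*i ∣ n then 2 else 0)
      else 1 := by
  classical
  obtain ⟨m, hm⟩ := hdvd
  set g : X → X := (⇑FX)^[i] with hg
  have hginj : Function.Injective g := Function.Injective.iterate FX.injective i
  have hstabm : ∀ (t : ℕ) (x : X), φ x = y → φ (g^[t] x) = y := by
    intro t
    induction t with
    | zero => intro x hx; simpa using hx
    | succ k ih =>
      intro x hx
      rw [Function.iterate_succ_apply']
      exact hstab _ (ih x hx)
  have hiter : ∀ x : X, (⇑FX)^[n] x = g^[m] x := by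
    intro x; rw [hm, Function.iterate_mul]
  by_cases hcard : Nat.card {x : X // φ x = y} = 2
  · rw [if_pos hcard]
    obtain ⟨u, v, huv, huniv⟩ := Nat.card_eq_two_iff.mp hcard
    have hmem : ∀ (x : X) (hx : φ x = y), x = u.val ∨ x = v.val := by
      intro x hx
      have : (⟨x, hx⟩ : {x : X // φ x = y}) ∈ (Set.univ : Set _) := Set.mem_univ _
      rw [← huniv] at this
      rcases this with h | h
      · exact Or.inl (congrArg Subtype.val h)
      · exact Or.inr (congrArg Subtype.val h)
    by_cases hall : ∀ x : X, φ x = y → (⇑FX)^[i] x = x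
    · rw [if_pos hall, ← hcard]
      apply Nat.card_congr
      apply Equiv.subtypeEquivRight
      intro x
      constructor
      · rintro ⟨hx, -⟩; exact hx
      · intro hx
        refine ⟨hx, ?_⟩
        rw [hiter]
        exact Function.iterate_fixed (hall x hx) m
    · rw [if_neg hall]
      push_neg at hall
      obtain ⟨x0, hx0, hnf⟩ := hall
      -- identify the other element w
      have hvne : u.val ≠ v.val := fun h => huv (Subtype.ext h)
      obtain ⟨w, hw, hwne, hmem'⟩ :
          ∃ w : X, φ w = y ∧ w ≠ x0 ∧ ∀ x : X, φ x = y → x = x0 ∨ x = w := by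
        rcases hmem x0 hx0 with h | h
        · exact ⟨v.val, v.2, fun hh => hvne (by rw [h] at hh; exact hh.symm),
            fun x hx => by rcases hmem x hx with h' | h' <;> simp [h', h]⟩
        · exact ⟨u.val, u.2, fun hh => hvne (by rw [h] at hh; exact hh),
            fun x hx => by rcases hmem x hx with h' | h' <;> simp [h', h]⟩
      have hswap1 : g x0 = w := by
        rcases hmem' (g x0) (hstab x0 hx0) with h | h
        · exact absurd h hnf
        · exact h
      have hswap2 : g w = x0 := by
        rcases hmem' (g w) (hstab w hw) with h | h
        · exact h
        · exfalso; exact hwne (hginj (hswap1.trans h.symm) ▸ rfl)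
      by_cases heven : 2 * i ∣ n
      · rw [if_pos heven]
        have h2m : 2 ∣ m := by
          obtain ⟨t, ht⟩ := heven
          refine ⟨t, ?_⟩
          have : i * m = i * (2 * t) := by rw [← hm, ht]; ring
          have := Nat.eq_of_mul_eq_mul_left hi this
          omega
        obtain ⟨t, ht⟩ := h2m
        have hfix : ∀ x : X, φ x = y → (⇑FX)^[n] x = x := by
          intro x hx
          rw [hiter, ht]
          rcases hmem' x hx with h | h
          · rw [h]; exact (swap_iter g x0 w hswap1 hswap2 t).1
          · rw [h]; exact (swap_iter g w x0 hswap2 hswap1 t).1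
        rw [← hcard]
        apply Nat.card_congr
        apply Equiv.subtypeEquivRight
        intro x
        exact ⟨fun h => h.1, fun hx => ⟨hx, hfix x hx⟩⟩
      · rw [if_neg heven]
        have hodd : ¬ 2 ∣ m := by
          intro ⟨t, ht⟩
          exact heven ⟨t, by rw [hm, ht]; ring⟩
        obtain ⟨t, ht⟩ : ∃ t, m = 2 * t + 1 := ⟨m / 2, by omega⟩
        rw [Nat.card_eq_zero]
        left
        constructor
        rintro ⟨x, hx, hfix⟩
        rw [hiter, ht] at hfix
        rcases hmem' x hx with h | h
        · rw [h, (swap_iter g x0 w hswap1 hswap2 t).2] at hfix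
          exact hwne hfix
        · rw [h, (swap_iter g w x0 hswap2 hswap1 t).2] at hfix
          exact hwne hfix.symm
  · rw [if_neg hcard]
    have hcard1 : Nat.card {x : X // φ x = y} = 1 := by omega
    have hsub : Subsingleton {x : X // φ x = y} :=
      (Nat.card_eq_one_iff_unique.mp hcard1).1
    have hfix : ∀ x : X, φ x = y → (⇑FX)^[n] x = x := by
      intro x hx
      have h' : φ ((⇑FX)^[n] x) = y := by rw [hiter]; exact hstabm m x hx
      have := hsub.elim (⟨(⇑FX)^[n] x, h'⟩ : {x : X // φ x = y}) ⟨x, hx⟩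
      exact congrArg Subtype.val this
    rw [← hcard1]
    apply Nat.card_congr
    apply Equiv.subtypeEquivRight
    intro x
    exact ⟨fun h => h.1, fun hx => ⟨hx, hfix x hx⟩⟩



/-- Trace of Frobenius of a degree-two cover `φ : X → Y` of the projective line in terms of
the counts `b_i`, `c_i` of unramified points of exact degree `i` with both preimages
rational, respectively conjugate. -/
theorem trace_from_double_cover (X Y : Type*) (FX : X ≃ X) (FY : Y ≃ Y) (φ : X → Y)
    (q : ℕ) (hq : 2 ≤ q)
    (hcomm : ∀ x, φ (FX x) = FY (φ x))
    (hfib : ∀ y : Y, 1 ≤ Nat.card {x : X // φ x = y} ∧ Nat.card {x : X // φ x = y} ≤ 2)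
    (hfin : ∀ i : ℕ, 1 ≤ i → Finite {y : Y // (⇑FY)^[i] y = y})
    (hY : ∀ i : ℕ, 1 ≤ i → Nat.card {y : Y // (⇑FY)^[i] y = y} = q ^ i + 1)
    (A : ℕ → Set Y)
    (hA : ∀ i, A i = {y : Y | (⇑FY)^[i] y = y ∧ ∀ j, 0 < j → j < i → (⇑FY)^[j] y ≠ y})
    (b c : ℕ → ℕ)
    (hb : ∀ i, b i = Nat.card {y : Y // y ∈ A i ∧ Nat.card {x : X // φ x = y} = 2 ∧
      ∀ x : X, φ x = y → (⇑FX)^[i] x = x})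
    (hc : ∀ i, c i = Nat.card {y : Y // y ∈ A i ∧ Nat.card {x : X // φ x = y} = 2 ∧
      ¬ ∀ x : X, φ x = y → (⇑FX)^[i] x = x})
    (n : ℕ) (hn : 1 ≤ n) :
    (1 + (q : ℤ) ^ n) - (Nat.card {x : X // (⇑FX)^[n] x = x} : ℤ)
      = ∑ i ∈ n.divisors.filter (fun i => ¬ (2 * i ∣ n)), ((c i : ℤ) - (b i : ℤ))
        + ∑ i ∈ n.divisors.filter (fun i => 2 * i ∣ n), (-(b i : ℤ) - (c i : ℤ)) := by
  classical
  have hn0 : n ≠ 0 := by omega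
  have hcomm' : ∀ (m : ℕ) (x : X), φ ((⇑FX)^[m] x) = (⇑FY)^[m] (φ x) := by
    intro m
    induction m with
    | zero => intro x; simp
    | succ k ih =>
      intro x
      rw [Function.iterate_succ_apply', Function.iterate_succ_apply', hcomm, ih]
  have hfibfin : ∀ y : Y, Finite {x : X // φ x = y} := fun y =>
    (Nat.card_pos_iff.mp (hfib y).1).2
  haveI : Finite {y : Y // (⇑FY)^[n] y = y} := hfin n hn
  haveI : Fintype {y : Y // (⇑FY)^[n] y = y} := Fintype.ofFinite _
  -- minimal period facts
  have hper : ∀ y : {y : Y // (⇑FY)^[n] y = y}, Function.IsPeriodicPt (⇑FY) n y.val :=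
    fun y => y.2
  have hgdvd : ∀ y : {y : Y // (⇑FY)^[n] y = y}, Function.minimalPeriod (⇑FY) y.val ∣ n :=
    fun y => (hper y).minimalPeriod_dvd
  have hgpos : ∀ y : {y : Y // (⇑FY)^[n] y = y}, 0 < Function.minimalPeriod (⇑FY) y.val :=
    fun y => Function.minimalPeriod_pos_of_mem_periodicPts ⟨n, by omega, hper y⟩
  have hgA : ∀ (y : {y : Y // (⇑FY)^[n] y = y}) (i : ℕ), 0 < i →
      (Function.minimalPeriod (⇑FY) y.val = i ↔ y.val ∈ A i) := by
    intro y i hi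
    constructor
    · intro h
      rw [hA]
      refine ⟨by rw [← h]; exact Function.isPeriodicPt_minimalPeriod (⇑FY) y.val, ?_⟩
      intro j hj hji hyj
      exact Function.not_isPeriodicPt_of_pos_of_lt_minimalPeriod (by omega) (h ▸ hji) hyj
    · intro hy
      rw [hA] at hy
      have hdvd' : Function.minimalPeriod (⇑FY) y.val ∣ i :=
        Function.IsPeriodicPt.minimalPeriod_dvd hy.1
      by_contra hne
      have hlt : Function.minimalPeriod (⇑FY) y.val < i :=
        lt_of_le_of_ne (Nat.le_of_dvd hi hdvd') hne
      exact hy.2 _ (hgpos y) hlt (Function.isPeriodicPt_minimalPeriod (⇑FY) y.val)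
  -- A i lands in FixY for i ∣ n
  have hAsub : ∀ i : ℕ, i ∣ n → ∀ y : Y, y ∈ A i → (⇑FY)^[n] y = y := by
    intro i hdvd y hy
    rw [hA] at hy
    obtain ⟨m, hm⟩ := hdvd
    rw [hm, Function.iterate_mul]
    exact Function.iterate_fixed hy.1 m
  -- step A : count fixed points of X fiberwise over FixY
  have stepA : Nat.card {x : X // (⇑FX)^[n] x = x}
      = ∑ y : {y : Y // (⇑FY)^[n] y = y}, Nat.card {x : X // φ x = y.val ∧ (⇑FX)^[n] x = x} := by
    have hmapsto : ∀ x : {x : X // (⇑FX)^[n] x = x}, (⇑FY)^[n] (φ x.val) = φ x.val := by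
      intro x; rw [← hcomm', x.2]
    have hfinfib : ∀ yy : {y : Y // (⇑FY)^[n] y = y},
        Finite {x : {x : X // (⇑FX)^[n] x = x} //
          (⟨φ x.val, hmapsto x⟩ : {y : Y // (⇑FY)^[n] y = y}) = yy} := by
      intro yy
      haveI := hfibfin yy.val
      apply Finite.of_injective (β := {x : X // φ x = yy.val})
        (fun p => ⟨p.1.1, congrArg Subtype.val p.2⟩)
      intro p q hpq
      have h1 := Subtype.ext_iff.mp hpq
      exact Subtype.ext (Subtype.ext h1)
    rw [card_eq_sum_card_fibers (fun x : {x : X // (⇑FX)^[n] x = x} =>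
      (⟨φ x.val, hmapsto x⟩ : {y : Y // (⇑FY)^[n] y = y})) hfinfib]
    apply Finset.sum_congr rfl
    intro yy _
    apply Nat.card_congr
    exact ⟨fun p => ⟨p.1.1, congrArg Subtype.val p.2, p.1.2⟩,
           fun p => ⟨⟨p.1, p.2.2⟩, Subtype.ext p.2.1⟩, fun p => rfl, fun p => rfl⟩
  -- step B : group by exact period
  have stepB : ∑ y : {y : Y // (⇑FY)^[n] y = y}, Nat.card {x : X // φ x = y.val ∧ (⇑FX)^[n] x = x}
      = ∑ i ∈ n.divisors, ∑ y ∈ univ.filter (fun y : {y : Y // (⇑FY)^[n] y = y} => y.val ∈ A i),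
          Nat.card {x : X // φ x = y.val ∧ (⇑FX)^[n] x = x} := by
    rw [← Finset.sum_fiberwise_of_maps_to
      (g := fun y : {y : Y // (⇑FY)^[n] y = y} => Function.minimalPeriod (⇑FY) y.val)
      (t := n.divisors)
      (fun y _ => Nat.mem_divisors.mpr ⟨hgdvd y, hn0⟩)
      (fun y => Nat.card {x : X // φ x = y.val ∧ (⇑FX)^[n] x = x})]
    apply Finset.sum_congr rfl
    intro i hi
    have hipos : 0 < i := Nat.pos_of_mem_divisors hi
    apply Finset.sum_congr _ (fun _ _ => rfl)
    apply Finset.filter_congr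
    intro y _
    exact hgA y i hipos
  -- inner sums
  have inner : ∀ i ∈ n.divisors,
      ∑ y ∈ univ.filter (fun y : {y : Y // (⇑FY)^[n] y = y} => y.val ∈ A i),
          Nat.card {x : X // φ x = y.val ∧ (⇑FX)^[n] x = x}
        = ((univ.filter (fun y : {y : Y // (⇑FY)^[n] y = y} => y.val ∈ A i)).filter
              (fun y => ¬ Nat.card {x : X // φ x = y.val} = 2)).card
          + 2 * ((univ.filter (fun y : {y : Y // (⇑FY)^[n] y = y} => y.val ∈ A i)).filter
              (fun y => Nat.card {x : X // φ x = y.val} = 2 ∧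
                ∀ x : X, φ x = y.val → (⇑FX)^[i] x = x)).card
          + (if 2*i ∣ n then
              2 * ((univ.filter (fun y : {y : Y // (⇑FY)^[n] y = y} => y.val ∈ A i)).filter
              (fun y => Nat.card {x : X // φ x = y.val} = 2 ∧
                ¬ ∀ x : X, φ x = y.val → (⇑FX)^[i] x = x)).card
             else 0) := by
    intro i hi
    rw [Nat.mem_divisors] at hi
    have hipos : 0 < i := Nat.pos_of_dvd_of_pos hi.1 (by omega)
    set S := univ.filter (fun y : {y : Y // (⇑FY)^[n] y = y} => y.val ∈ A i) with hS
    have hval : ∀ y ∈ S,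
        Nat.card {x : X // φ x = y.val ∧ (⇑FX)^[n] x = x}
          = if Nat.card {x : X // φ x = y.val} = 2 then
              (if ∀ x : X, φ x = y.val → (⇑FX)^[i] x = x then 2
               else if 2*i ∣ n then 2 else 0)
            else 1 := by
      intro y hy
      rw [hS, Finset.mem_filter] at hy
      have hyA := hy.2
      rw [hA] at hyA
      exact fiber_fixed_count FX φ y.val (hfib _).1 (hfib _).2 i n hipos hi.1
        (fun x hx => by rw [hcomm', hx, hyA.1])
    rw [Finset.sum_congr rfl hval]
    rw [← Finset.sum_filter_add_sum_filter_not S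
      (fun y => Nat.card {x : X // φ x = y.val} = 2)]
    have e1 : ∑ y ∈ S.filter (fun y => ¬ Nat.card {x : X // φ x = y.val} = 2),
        (if Nat.card {x : X // φ x = y.val} = 2 then
              (if ∀ x : X, φ x = y.val → (⇑FX)^[i] x = x then 2
               else if 2*i ∣ n then 2 else 0) else 1)
        = (S.filter (fun y => ¬ Nat.card {x : X // φ x = y.val} = 2)).card := by
      rw [Finset.sum_congr rfl (fun y hy => ?_), Finset.sum_const, smul_eq_mul, mul_one]
      rw [Finset.mem_filter] at hy
      rw [if_neg hy.2]
    have e2 : ∑ y ∈ S.filter (fun y => Nat.card {x : X // φ x = y.val} = 2),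
        (if Nat.card {x : X // φ x = y.val} = 2 then
              (if ∀ x : X, φ x = y.val → (⇑FX)^[i] x = x then 2
               else if 2*i ∣ n then 2 else 0) else 1)
        = ∑ y ∈ S.filter (fun y => Nat.card {x : X // φ x = y.val} = 2),
            (if ∀ x : X, φ x = y.val → (⇑FX)^[i] x = x then 2
               else if 2*i ∣ n then 2 else 0) := by
      refine Finset.sum_congr rfl (fun y hy => ?_)
      rw [Finset.mem_filter] at hy
      rw [if_pos hy.2]
    rw [e1, e2]
    rw [← Finset.sum_filter_add_sum_filter_not
      (S.filter (fun y => Nat.card {x : X // φ x = y.val} = 2))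
      (fun y => ∀ x : X, φ x = y.val → (⇑FX)^[i] x = x)]
    have e3 : ∑ y ∈ (S.filter (fun y => Nat.card {x : X // φ x = y.val} = 2)).filter
        (fun y => ∀ x : X, φ x = y.val → (⇑FX)^[i] x = x),
        (if ∀ x : X, φ x = y.val → (⇑FX)^[i] x = x then 2
               else if 2*i ∣ n then 2 else 0)
        = 2 * (S.filter (fun y => Nat.card {x : X // φ x = y.val} = 2 ∧
                ∀ x : X, φ x = y.val → (⇑FX)^[i] x = x)).card := by
      rw [Finset.sum_congr rfl (fun y hy => ?_), Finset.sum_const, smul_eq_mul,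
        Finset.filter_filter, mul_comm]
      rw [Finset.mem_filter] at hy
      rw [if_pos hy.2]
    have e4 : ∑ y ∈ (S.filter (fun y => Nat.card {x : X // φ x = y.val} = 2)).filter
        (fun y => ¬ ∀ x : X, φ x = y.val → (⇑FX)^[i] x = x),
        (if ∀ x : X, φ x = y.val → (⇑FX)^[i] x = x then 2
               else if 2*i ∣ n then 2 else 0)
        = if 2*i ∣ n then
            2 * (S.filter (fun y => Nat.card {x : X // φ x = y.val} = 2 ∧
                ¬ ∀ x : X, φ x = y.val → (⇑FX)^[i] x = x)).card
          else 0 := by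
      by_cases h2 : 2*i ∣ n
      · have hc2 : ∀ y ∈ (S.filter (fun y => Nat.card {x : X // φ x = y.val} = 2)).filter
            (fun y => ¬ ∀ x : X, φ x = y.val → (⇑FX)^[i] x = x),
            (if ∀ x : X, φ x = y.val → (⇑FX)^[i] x = x then 2
               else if 2*i ∣ n then 2 else 0) = 2 := by
          intro y hy
          rw [Finset.mem_filter] at hy
          rw [if_neg hy.2, if_pos h2]
        rw [Finset.sum_congr rfl hc2, Finset.sum_const, smul_eq_mul,
          Finset.filter_filter, mul_comm, if_pos h2]
      · have hc2 : ∀ y ∈ (S.filter (fun y => Nat.card {x : X // φ x = y.val} = 2)).filter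
            (fun y => ¬ ∀ x : X, φ x = y.val → (⇑FX)^[i] x = x),
            (if ∀ x : X, φ x = y.val → (⇑FX)^[i] x = x then 2
               else if 2*i ∣ n then 2 else 0) = 0 := by
          intro y hy
          rw [Finset.mem_filter] at hy
          rw [if_neg hy.2, if_neg h2]
        rw [Finset.sum_congr rfl hc2, Finset.sum_const, smul_eq_mul, mul_zero, if_neg h2]
    rw [e3, e4]
    ring
  -- name the three counts
  set Rn : ℕ → ℕ := fun i =>
    ((univ.filter (fun y : {y : Y // (⇑FY)^[n] y = y} => y.val ∈ A i)).filter
      (fun y => ¬ Nat.card {x : X // φ x = y.val} = 2)).card with hRn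
  set Bn : ℕ → ℕ := fun i =>
    ((univ.filter (fun y : {y : Y // (⇑FY)^[n] y = y} => y.val ∈ A i)).filter
      (fun y => Nat.card {x : X // φ x = y.val} = 2 ∧
        ∀ x : X, φ x = y.val → (⇑FX)^[i] x = x)).card with hBn
  set Cn : ℕ → ℕ := fun i =>
    ((univ.filter (fun y : {y : Y // (⇑FY)^[n] y = y} => y.val ∈ A i)).filter
      (fun y => Nat.card {x : X // φ x = y.val} = 2 ∧
        ¬ ∀ x : X, φ x = y.val → (⇑FX)^[i] x = x)).card with hCn
  have fact3 : Nat.card {x : X // (⇑FX)^[n] x = x}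
      = ∑ i ∈ n.divisors, (Rn i + 2 * Bn i + (if 2*i ∣ n then 2 * Cn i else 0)) := by
    rw [stepA, stepB]
    refine Finset.sum_congr rfl (fun i hi => ?_)
    rw [inner i hi]
  -- identify b and c with the finset counts
  have hbid : ∀ i ∈ n.divisors, b i = Bn i := by
    intro i hi
    rw [hb i, natCard_subtype_restrict _ (fun y => (⇑FY)^[n] y = y)
      (fun y hy => hAsub i (Nat.dvd_of_mem_divisors hi) y hy.1),
      Nat.card_eq_fintype_card, Fintype.card_subtype]
    simp only [hBn]
    rw [Finset.filter_filter]
  have hcid : ∀ i ∈ n.divisors, c i = Cn i := by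
    intro i hi
    rw [hc i, natCard_subtype_restrict _ (fun y => (⇑FY)^[n] y = y)
      (fun y hy => hAsub i (Nat.dvd_of_mem_divisors hi) y hy.1),
      Nat.card_eq_fintype_card, Fintype.card_subtype]
    simp only [hCn]
    rw [Finset.filter_filter]
  -- total count of FixY
  have fact4 : q ^ n + 1 = ∑ i ∈ n.divisors, (Rn i + Bn i + Cn i) := by
    have htot : q ^ n + 1 = ∑ i ∈ n.divisors,
        (univ.filter (fun y : {y : Y // (⇑FY)^[n] y = y} => y.val ∈ A i)).card := by
      rw [← hY n hn, Nat.card_eq_fintype_card, ← Finset.card_univ,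
        Finset.card_eq_sum_card_fiberwise
          (f := fun y : {y : Y // (⇑FY)^[n] y = y} => Function.minimalPeriod (⇑FY) y.val)
          (t := n.divisors) (fun y _ => Nat.mem_divisors.mpr ⟨hgdvd y, hn0⟩)]
      refine Finset.sum_congr rfl (fun i hi => ?_)
      exact congrArg Finset.card
        (Finset.filter_congr (fun y _ => hgA y i (Nat.pos_of_mem_divisors hi)))
    rw [htot]
    refine Finset.sum_congr rfl (fun i hi => ?_)
    have hsplit : ∀ S : Finset {y : Y // (⇑FY)^[n] y = y},
        S.card = (S.filter (fun y => ¬ Nat.card {x : X // φ x = y.val} = 2)).card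
          + (S.filter (fun y => Nat.card {x : X // φ x = y.val} = 2 ∧
              ∀ x : X, φ x = y.val → (⇑FX)^[i] x = x)).card
          + (S.filter (fun y => Nat.card {x : X // φ x = y.val} = 2 ∧
              ¬ ∀ x : X, φ x = y.val → (⇑FX)^[i] x = x)).card := by
      intro S
      have h1 := Finset.card_filter_add_card_filter_not
        (s := S) (p := fun y => Nat.card {x : X // φ x = y.val} = 2)
      have h2 := Finset.card_filter_add_card_filter_not
        (s := S.filter (fun y => Nat.card {x : X // φ x = y.val} = 2))
        (p := fun y => ∀ x : X, φ x = y.val → (⇑FX)^[i] x = x)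
      rw [Finset.filter_filter, Finset.filter_filter] at h2
      omega
    simp only [hRn, hBn, hCn]
    exact hsplit _
  -- final computation over ℤ
  have goalN : (1 + (q : ℤ) ^ n) = ∑ i ∈ n.divisors, ((Rn i : ℤ) + (Bn i : ℤ) + (Cn i : ℤ)) := by
    have h := congrArg (Nat.cast : ℕ → ℤ) fact4
    push_cast at h
    linarith
  have goalX : (Nat.card {x : X // (⇑FX)^[n] x = x} : ℤ)
      = ∑ i ∈ n.divisors, ((Rn i : ℤ) + 2 * (Bn i : ℤ)
          + (if 2*i ∣ n then 2 * (Cn i : ℤ) else 0)) := by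
    have h := congrArg (Nat.cast : ℕ → ℤ) fact3
    push_cast at h
    exact h
  rw [goalX, goalN, add_comm
    (∑ i ∈ n.divisors.filter (fun i => ¬ (2 * i ∣ n)), ((c i : ℤ) - (b i : ℤ)))
    (∑ i ∈ n.divisors.filter (fun i => 2 * i ∣ n), (-(b i : ℤ) - (c i : ℤ))),
    ← Finset.sum_ite (fun i => -(b i : ℤ) - (c i : ℤ)) (fun i => (c i : ℤ) - (b i : ℤ)),
    ← Finset.sum_sub_distrib]
  refine Finset.sum_congr rfl (fun i hi => ?_)
  rw [hbid i hi, hcid i hi]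
  by_cases h2 : 2*i ∣ n
  · simp only [if_pos h2]
    ring
  · simp only [if_neg h2]
    ring
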